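/- If there exists an ordering π of the vertices of a hypergraph H that separates no simple pair of edges, then H is 2-colorable. -/

import Mathlib

open Classical

/-- `π` separates the simple pair `(X, Y)`: with `X ∩ Y = {y}`, all of `X \ {y}`
precedes `y` and `y` precedes all of `Y \ {y}` in the ordering `π`. -/
def Separates {V : Type*} [Fintype V] [DecidableEq V] (π : V ≃ Fin (Fintype.card V))
    (X Y : Finset V) : Prop :=
  ∃ y, X ∩ Y = {y} ∧ (∀ x ∈ X, x ≠ y → π x < π y) ∧ (∀ z ∈ Y, z ≠ y → π y < π z)

/-- A hypergraph with edge set `E` is 2-colorable if some 2-coloring of the vertices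
leaves no edge monochromatic. -/
def TwoColorable {V : Type*} (E : Finset (Finset V)) : Prop :=
  ∃ c : V → Bool, ∀ X ∈ E, (∃ v ∈ X, c v = true) ∧ (∃ v ∈ X, c v = false)

/-- `m₂(H)`: the number of ordered simple pairs of edges. -/
def m2 {V : Type*} [DecidableEq V] (E : Finset (Finset V)) : ℕ :=
  ((E ×ˢ E).filter fun p => (p.1 ∩ p.2).card = 1).card


noncomputable def colA {V : Type*} [Fintype V] [DecidableEq V]
    (E : Finset (Finset V)) (π : V ≃ Fin (Fintype.card V)) (n : ℕ) : Bool :=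
  Nat.strongRec (motive := fun _ => Bool) (fun n ih =>
    if (∃ X ∈ E, ∃ v ∈ X, (π v : ℕ) = n ∧ (∀ x ∈ X, x ≠ v → π x < π v) ∧
        ∀ x ∈ X, ∀ h : (π x : ℕ) < n, ih (π x) h = false)
    then true else false) n

lemma colA_eq {V : Type*} [Fintype V] [DecidableEq V]
    (E : Finset (Finset V)) (π : V ≃ Fin (Fintype.card V)) (n : ℕ) :
    colA E π n = true ↔
      (∃ X ∈ E, ∃ v ∈ X, (π v : ℕ) = n ∧ (∀ x ∈ X, x ≠ v → π x < π v) ∧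
        ∀ x ∈ X, (π x : ℕ) < n → colA E π (π x) = false) := by
  rw [colA, Nat.strongRec_eq]
  split
  · rename_i h
    exact iff_of_true rfl h
  · rename_i h
    exact iff_of_false (by simp) h

lemma col_true_iff {V : Type*} [Fintype V] [DecidableEq V]
    (E : Finset (Finset V)) (π : V ≃ Fin (Fintype.card V)) (v : V) :
    colA E π (π v) = true ↔
      ∃ X ∈ E, v ∈ X ∧ (∀ x ∈ X, x ≠ v → π x < π v) ∧
        ∀ x ∈ X, x ≠ v → colA E π (π x) = false := by
  rw [colA_eq]
  constructor
  · rintro ⟨X, hX, w, hwX, hw, hlt, hcol⟩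
    have hwv : w = v := π.injective (Fin.val_injective hw)
    subst hwv
    exact ⟨X, hX, hwX, hlt, fun x hx hxv => hcol x hx (hlt x hx hxv)⟩
  · rintro ⟨X, hX, hv, hlt, hcol⟩
    refine ⟨X, hX, v, hv, rfl, hlt, fun x hx hxlt => hcol x hx ?_⟩
    rintro rfl
    exact lt_irrefl _ hxlt

theorem stmt_14 {V : Type*} [Fintype V] [DecidableEq V]
    (E : Finset (Finset V)) (hne : ∀ X ∈ E, X.Nonempty)
    (hπ : ∃ π : V ≃ Fin (Fintype.card V),
      ∀ X ∈ E, ∀ Y ∈ E, (X ∩ Y).card = 1 → ¬ Separates π X Y) :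
    TwoColorable E := by
  obtain ⟨π, hsep⟩ := hπ
  refine ⟨fun v => colA E π (π v), fun X hX => ?_⟩
  constructor
  · -- some vertex is true: else the max vertex would have been colored true
    by_contra hall
    push_neg at hall
    obtain ⟨v, hvX, hmax⟩ := X.exists_max_image (fun v => π v) (hne X hX)
    have : colA E π (π v) = true := by
      rw [col_true_iff]
      exact ⟨X, hX, hvX,
        fun x hx hxv => lt_of_le_of_ne (hmax x hx)
          (fun h => hxv (π.injective h)),
        fun x hx _ => Bool.eq_false_iff.mpr (hall x hx)⟩
    exact hall v hvX this
  · -- some vertex is false: else the min vertex y was colored true by some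
    -- edge X' forming a separated simple pair (X', X)
    by_contra hall
    push_neg at hall
    simp only [Bool.ne_false_iff] at hall
    obtain ⟨y, hyX, hmin⟩ := X.exists_min_image (fun v => π v) (hne X hX)
    obtain ⟨X', hX', hyX', hlt, hcol⟩ := (col_true_iff E π y).mp (hall y hyX)
    have hint : X' ∩ X = {y} := by
      rw [Finset.eq_singleton_iff_unique_mem]
      refine ⟨Finset.mem_inter.mpr ⟨hyX', hyX⟩, fun x hx => ?_⟩
      by_contra hxy
      have h1 := hcol x (Finset.mem_inter.mp hx).1 hxy
      have h2 := hall x (Finset.mem_inter.mp hx).2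
      rw [h1] at h2
      exact Bool.false_ne_true h2
    refine hsep X' hX' X hX (by rw [hint]; simp) ?_
    exact ⟨y, hint, hlt, fun z hz hzy =>
      lt_of_le_of_ne (hmin z hz) (fun h => hzy (π.injective h.symm))⟩
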